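/- Let K ≥ 1 and for z ∈ ℝ^K define the softmax probabilities p_i(z) = exp(z_i)/(1 + Σ_{k=1}^K exp(z_k)) for i ∈ [K]. Then for any z, z' ∈ ℝ^K and any nonnegative weights ω₁, …, ω_K ≥ 0: Σ_{i=1}^K ω_i |p_i(z) − p_i(z')| ≤ 2 (max_{1≤i≤K} ω_i) · ‖z − z'‖_∞. -/

import Mathlib

/-- Softmax probabilities: `pᵢ(z) = exp(zᵢ)/(1 + Σₖ exp(zₖ))`. -/
noncomputable def softmaxP (K : ℕ) (z : Fin K → ℝ) (i : Fin K) : ℝ :=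
  Real.exp (z i) / (1 + ∑ k, Real.exp (z k))

set_option maxHeartbeats 1000000 in
/-- **core of Lemma F.2.** Weighted total-variation Lipschitz
bound for the softmax probabilities with respect to the `ℓ∞`-norm of the
utilities: for nonnegative weights `ωᵢ`,
`Σᵢ ωᵢ |pᵢ(z) − pᵢ(z')| ≤ 2 (maxᵢ ωᵢ) ‖z − z'‖_∞`.
(The norm on `Fin K → ℝ` is the sup-norm.) -/
theorem softmax_weighted_tv_lipschitz (K : ℕ) (hK : 1 ≤ K) (z z' : Fin K → ℝ)
    (ω : Fin K → ℝ) (hω : ∀ i, 0 ≤ ω i) :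
    ∑ i, ω i * |softmaxP K z i - softmaxP K z' i| ≤ 2 * (⨆ i, ω i) * ‖z - z'‖ := by
  classical
  have i0 : Fin K := ⟨0, hK⟩
  set δ := ‖z - z'‖ with hδdef
  have hδ0 : 0 ≤ δ := norm_nonneg _
  set W := ⨆ i, ω i with hWdef
  have hWle : ∀ i, ω i ≤ W := fun i =>
    le_ciSup (Set.Finite.bddAbove (Set.finite_range ω)) i
  have hW0 : 0 ≤ W := le_trans (hω i0) (hWle i0)
  have hd : ∀ i, |z i - z' i| ≤ δ := fun i => by
    simpa [Real.norm_eq_abs] using norm_le_pi_norm (z - z') i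
  set c : Fin K → ℝ := fun i =>
    if softmaxP K z' i ≤ softmaxP K z i then ω i else -ω i with hc
  have hcabs : ∀ i, |c i| = ω i := fun i => by
    by_cases h : softmaxP K z' i ≤ softmaxP K z i <;>
      simp [hc, h, abs_of_nonneg (hω i)]
  set u : ℝ → Fin K → ℝ := fun t i => z' i + t * (z i - z' i) with hu
  set S : ℝ → ℝ := fun t => 1 + ∑ k, Real.exp (u t k) with hS
  have hSsum : ∀ t, (0:ℝ) ≤ ∑ k, Real.exp (u t k) := fun t =>
    Finset.sum_nonneg fun k _ => (Real.exp_pos _).le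
  have hSpos : ∀ t, 0 < S t := fun t => by
    have := hSsum t
    have h1 : (0:ℝ) < 1 + ∑ k, Real.exp (u t k) := by linarith
    simpa [hS] using h1
  set g : ℝ → ℝ := fun t => ∑ i, c i * (Real.exp (u t i) / S t) with hg
  set g' : ℝ → ℝ := fun t => ∑ i, c i *
    ((Real.exp (u t i) * (z i - z' i) * S t -
      Real.exp (u t i) * ∑ k, Real.exp (u t k) * (z k - z' k)) / (S t) ^ 2) with hg'
  have hlin : ∀ (k : Fin K) (t : ℝ),
      HasDerivAt (fun t : ℝ => z' k + t * (z k - z' k)) (z k - z' k) t := fun k t => by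
    simpa using ((hasDerivAt_id t).mul_const (z k - z' k)).const_add (z' k)
  have hSder : ∀ t, HasDerivAt S (∑ k, Real.exp (u t k) * (z k - z' k)) t := by
    intro t
    have h2 : HasDerivAt (fun t => ∑ k, Real.exp (u t k))
        (∑ k, Real.exp (u t k) * (z k - z' k)) t := by
      apply HasDerivAt.fun_sum
      intro k _
      simpa [hu] using (hlin k t).exp
    simpa [hS] using h2.const_add 1
  have hgder : ∀ t, HasDerivAt g (g' t) t := by
    intro t
    apply HasDerivAt.fun_sum
    intro i _
    exact (((hlin i t).exp.div (hSder t) (hSpos t).ne')).const_mul (c i)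
  obtain ⟨t0, _, heq⟩ := exists_hasDerivAt_eq_slope g g' one_pos
    (fun x _ => (hgder x).continuousAt.continuousWithinAt)
    (fun x _ => hgder x)
  have hslope : g' t0 = g 1 - g 0 := by simpa using heq
  have hu1 : u 1 = z := funext fun i => by simp [hu]
  have hu0 : u 0 = z' := funext fun i => by simp [hu]
  have hg1 : g 1 = ∑ i, c i * softmaxP K z i := by
    simp [hg, hu1, hS, softmaxP]
  have hg0 : g 0 = ∑ i, c i * softmaxP K z' i := by
    simp [hg, hu0, hS, softmaxP]
  have hlhs : ∑ i, ω i * |softmaxP K z i - softmaxP K z' i| = g 1 - g 0 := by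
    rw [hg1, hg0, ← Finset.sum_sub_distrib]
    refine Finset.sum_congr rfl fun i _ => ?_
    by_cases h : softmaxP K z' i ≤ softmaxP K z i
    · rw [abs_of_nonneg (by linarith)]; simp [hc, h]; ring
    · rw [abs_of_nonpos (by push_neg at h; linarith)]; simp [hc, h]; ring
  -- bound |g' t0| ≤ 2 * W * δ
  have hbound : |g' t0| ≤ 2 * W * δ := by
    have hterm : ∀ i : Fin K, |c i *
        ((Real.exp (u t0 i) * (z i - z' i) * S t0 -
          Real.exp (u t0 i) * ∑ k, Real.exp (u t0 k) * (z k - z' k)) / (S t0) ^ 2)|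
        ≤ W * (2 * δ * (Real.exp (u t0 i) / S t0)) := by
      intro i
      set N := Real.exp (u t0 i) with hN
      have hNpos : 0 < N := Real.exp_pos _
      set T := ∑ k, Real.exp (u t0 k) * (z k - z' k) with hT
      have hSd : |T| ≤ δ * S t0 := by
        calc |T| ≤ ∑ k, |Real.exp (u t0 k) * (z k - z' k)| :=
            Finset.abs_sum_le_sum_abs _ _
          _ ≤ ∑ k, Real.exp (u t0 k) * δ := by
              refine Finset.sum_le_sum fun k _ => ?_
              rw [abs_mul, abs_of_nonneg (Real.exp_pos _).le]
              exact mul_le_mul_of_nonneg_left (hd k) (Real.exp_pos _).le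
          _ = (∑ k, Real.exp (u t0 k)) * δ := by rw [← Finset.sum_mul]
          _ ≤ S t0 * δ := by
              have h1 : (∑ k, Real.exp (u t0 k)) ≤ S t0 := by
                simp only [hS]; linarith [hSsum t0]
              exact mul_le_mul_of_nonneg_right h1 hδ0
          _ = δ * S t0 := (mul_comm _ _)
      have hnum : |N * (z i - z' i) * S t0 - N * T| ≤ 2 * δ * N * S t0 := by
        have h1 : |N * (z i - z' i) * S t0| ≤ N * δ * S t0 := by
          rw [abs_mul, abs_mul, abs_of_nonneg hNpos.le, abs_of_nonneg (hSpos t0).le]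
          exact mul_le_mul_of_nonneg_right
            (mul_le_mul_of_nonneg_left (hd i) hNpos.le) (hSpos t0).le
        have h2 : |N * T| ≤ N * (δ * S t0) := by
          rw [abs_mul, abs_of_nonneg hNpos.le]
          exact mul_le_mul_of_nonneg_left hSd hNpos.le
        calc |N * (z i - z' i) * S t0 - N * T|
            ≤ |N * (z i - z' i) * S t0| + |N * T| := (abs_sub _ _)
          _ ≤ N * δ * S t0 + N * (δ * S t0) := (add_le_add h1 h2)
          _ = 2 * δ * N * S t0 := by ring
      have hS2 : (0:ℝ) < (S t0) ^ 2 := pow_pos (hSpos t0) 2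
      have h3 : |(N * (z i - z' i) * S t0 - N * T) / (S t0) ^ 2|
          ≤ 2 * δ * (N / S t0) := by
        rw [abs_div, abs_of_nonneg (sq_nonneg (S t0)), div_le_iff₀ hS2]
        calc |N * (z i - z' i) * S t0 - N * T| ≤ 2 * δ * N * S t0 := hnum
          _ = 2 * δ * (N / S t0) * (S t0) ^ 2 := by
              have hcancel : N / S t0 * S t0 = N := div_mul_cancel₀ N (hSpos t0).ne'
              calc 2 * δ * N * S t0 = 2 * δ * (N / S t0 * S t0) * S t0 := by rw [hcancel]
                _ = 2 * δ * (N / S t0) * (S t0) ^ 2 := by ring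
      rw [abs_mul, hcabs]
      exact mul_le_mul (hWle i) h3 (abs_nonneg _) hW0
    calc |g' t0| ≤ ∑ i, |c i *
        ((Real.exp (u t0 i) * (z i - z' i) * S t0 -
          Real.exp (u t0 i) * ∑ k, Real.exp (u t0 k) * (z k - z' k)) / (S t0) ^ 2)| := by
          rw [hg']; exact Finset.abs_sum_le_sum_abs _ _
      _ ≤ ∑ i, W * (2 * δ * (Real.exp (u t0 i) / S t0)) :=
          (Finset.sum_le_sum fun i _ => hterm i)
      _ = 2 * W * δ * ((∑ i, Real.exp (u t0 i)) / S t0) := by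
          rw [Finset.sum_div, Finset.mul_sum]
          exact Finset.sum_congr rfl fun i _ => by ring
      _ ≤ 2 * W * δ * 1 := by
          have hle : (∑ i, Real.exp (u t0 i)) / S t0 ≤ 1 := by
            rw [div_le_one (hSpos t0)]
            simp only [hS]; linarith [hSsum t0]
          have h0 : (0:ℝ) ≤ 2 * W * δ := by positivity
          exact mul_le_mul_of_nonneg_left hle h0
      _ = 2 * W * δ := by ring
  calc ∑ i, ω i * |softmaxP K z i - softmaxP K z' i| = g 1 - g 0 := hlhs
    _ = g' t0 := hslope.symm
    _ ≤ |g' t0| := le_abs_self _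
    _ ≤ 2 * W * δ := hbound
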